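/- Let M > 0, t > 0, let V ≥ 1 be an integer, and set I_j = [(j−1)/V, j/V] with midpoint A_j = (2j−1)/(2V) for j = 1,…,V. Let f : [0,1] → ℝ be M-Lipschitz, let A* ∈ [0,1] satisfy f(A*) ≥ f(A) for all A ∈ [0,1], and let j* be an index with A* ∈ I_{j*}. Let w : [0,1] → ℝ be integrable with w(A) ≥ η for a constant η > 0, and define the weighted averages f_{I_j} = (∫_{I_j} f(A) w(A) dA) / (∫_{I_j} w(A) dA). Suppose γ ∈ (0, 1/(2V)] is such that f(A*) − f(A) > M t whenever |A − A*| ≥ γ. Then for every j ≠ j*, f_{I_{j*}} − f_{I_j} ≥ M t − 3M/V. (The key gap estimate for interval-averaged rewards in the proof of Theorem 3.) -/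

import Mathlib

open MeasureTheory

lemma avg_bounds (η : ℝ) (hη : 0 < η) (a b : ℝ) (hab : a < b) (f w : ℝ → ℝ)
    (hw : ∀ A ∈ Set.Icc a b, η ≤ w A)
    (hwi : IntegrableOn w (Set.Icc a b))
    (hfwi : IntegrableOn (fun A => f A * w A) (Set.Icc a b))
    (lo hi : ℝ) (hlo : ∀ A ∈ Set.Icc a b, lo ≤ f A)
    (hhi : ∀ A ∈ Set.Icc a b, f A ≤ hi) :
    lo ≤ (∫ A in Set.Icc a b, f A * w A) / (∫ A in Set.Icc a b, w A) ∧
    (∫ A in Set.Icc a b, f A * w A) / (∫ A in Set.Icc a b, w A) ≤ hi := by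
  have hwpos : ∀ A ∈ Set.Icc a b, 0 ≤ w A := fun A hA => le_trans hη.le (hw A hA)
  have hconst : IntegrableOn (fun _ : ℝ => η) (Set.Icc a b) :=
    integrableOn_const measure_Icc_lt_top.ne
  have hden : 0 < ∫ A in Set.Icc a b, w A := by
    have h1 : ∫ A in Set.Icc a b, (η : ℝ) ≤ ∫ A in Set.Icc a b, w A :=
      setIntegral_mono_on hconst hwi measurableSet_Icc hw
    have h2 : ∫ A in Set.Icc a b, (η : ℝ) = (b - a) * η := by
      rw [setIntegral_const, measureReal_def, Real.volume_Icc, ENNReal.toReal_ofReal (by linarith), smul_eq_mul]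
    have : 0 < (b - a) * η := mul_pos (by linarith) hη
    linarith
  constructor
  · rw [le_div_iff₀ hden]
    have : ∫ A in Set.Icc a b, lo * w A ≤ ∫ A in Set.Icc a b, f A * w A :=
      setIntegral_mono_on (hwi.const_mul lo) hfwi measurableSet_Icc
        (fun A hA => mul_le_mul_of_nonneg_right (hlo A hA) (hwpos A hA))
    rwa [integral_const_mul] at this
  · rw [div_le_iff₀ hden]
    have : ∫ A in Set.Icc a b, f A * w A ≤ ∫ A in Set.Icc a b, hi * w A :=
      setIntegral_mono_on hfwi (hwi.const_mul hi) measurableSet_Icc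
        (fun A hA => mul_le_mul_of_nonneg_right (hhi A hA) (hwpos A hA))
    rwa [integral_const_mul] at this

theorem stmt_16
    (M t η γ : ℝ) (hM : 0 < M) (ht : 0 < t) (hη : 0 < η)
    (V : ℕ) (hV : 1 ≤ V)
    (f w : ℝ → ℝ)
    (hf : ∀ A ∈ Set.Icc (0:ℝ) 1, ∀ B ∈ Set.Icc (0:ℝ) 1, |f A - f B| ≤ M * |A - B|)
    (Astar : ℝ) (hAstar : Astar ∈ Set.Icc (0:ℝ) 1)
    (hmax : ∀ A ∈ Set.Icc (0:ℝ) 1, f A ≤ f Astar)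
    (jstar : Fin V)
    (hjstar : Astar ∈ Set.Icc (((jstar : ℕ) : ℝ) / V) ((((jstar : ℕ) : ℝ) + 1) / V))
    (hw : ∀ A ∈ Set.Icc (0:ℝ) 1, η ≤ w A)
    (hwint : IntegrableOn w (Set.Icc (0:ℝ) 1))
    (hwfint : IntegrableOn (fun A => f A * w A) (Set.Icc (0:ℝ) 1))
    (fI : Fin V → ℝ)
    (hfI : ∀ j, fI j =
      (∫ A in Set.Icc (((j : ℕ) : ℝ) / V) ((((j : ℕ) : ℝ) + 1) / V), f A * w A) /
      (∫ A in Set.Icc (((j : ℕ) : ℝ) / V) ((((j : ℕ) : ℝ) + 1) / V), w A))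
    (hγ : γ ∈ Set.Ioc (0:ℝ) (1 / (2 * V)))
    (hgap : ∀ A ∈ Set.Icc (0:ℝ) 1, γ ≤ |A - Astar| → M * t < f Astar - f A) :
    ∀ j, j ≠ jstar → M * t - 3 * M / V ≤ fI jstar - fI j := by
  intro j hj
  have hVpos : (0:ℝ) < V := by exact_mod_cast hV
  have hδ : (0:ℝ) < 1 / (2 * (V:ℝ)) := by positivity
  have hab : ∀ k : Fin V, ((k : ℕ) : ℝ) / V < (((k : ℕ) : ℝ) + 1) / V := by
    intro k; exact (div_lt_div_iff_of_pos_right hVpos).mpr (by linarith)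
  have hsub : ∀ k : Fin V,
      Set.Icc (((k : ℕ) : ℝ) / V) ((((k : ℕ) : ℝ) + 1) / V) ⊆ Set.Icc (0:ℝ) 1 := by
    intro k
    have hk : ((k : ℕ) : ℝ) + 1 ≤ V := by exact_mod_cast k.isLt
    apply Set.Icc_subset_Icc
    · positivity
    · rw [div_le_one hVpos]; exact hk
  -- midpoint of interval j
  set c : ℝ := (((j : ℕ) : ℝ) + 1/2) / V with hc
  have hcmem : c ∈ Set.Icc (0:ℝ) 1 := by
    have hk : ((j : ℕ) : ℝ) + 1 ≤ V := by exact_mod_cast j.isLt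
    constructor
    · positivity
    · rw [div_le_one hVpos]; linarith
  have e1 : c - 1 / (2 * (V:ℝ)) = ((j : ℕ) : ℝ) / V := by
    rw [hc]; field_simp; ring
  have e2 : c + 1 / (2 * (V:ℝ)) = (((j : ℕ) : ℝ) + 1) / V := by
    rw [hc]; field_simp; ring
  have hcfar : 1 / (2 * V) ≤ |c - Astar| := by
    have hk : (j : ℕ) ≠ (jstar : ℕ) := fun h => hj (Fin.ext h)
    rcases lt_or_gt_of_ne hk with h | h
    · have h' : ((j : ℕ) : ℝ) + 1 ≤ ((jstar : ℕ) : ℝ) := by exact_mod_cast h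
      have h1 : c + 1 / (2 * (V:ℝ)) ≤ Astar := by
        rw [e2]
        refine le_trans ?_ hjstar.1
        gcongr
      rw [abs_sub_comm, abs_of_nonneg (by linarith)]
      linarith
    · have h' : ((jstar : ℕ) : ℝ) + 1 ≤ ((j : ℕ) : ℝ) := by exact_mod_cast h
      have h1 : Astar ≤ c - 1 / (2 * (V:ℝ)) := by
        rw [e1]
        refine le_trans hjstar.2 ?_
        gcongr
      rw [abs_of_nonneg (by linarith)]
      linarith
  have hγle : γ ≤ |c - Astar| := le_trans hγ.2 hcfar
  have hfc : f c < f Astar - M * t := by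
    have := hgap c hcmem hγle; linarith
  -- upper bound on f over interval j
  have hhi : ∀ A ∈ Set.Icc (((j : ℕ) : ℝ) / V) ((((j : ℕ) : ℝ) + 1) / V),
      f A ≤ f Astar - M * t + M / (2 * V) := by
    intro A hA
    have hA1 : A ∈ Set.Icc (0:ℝ) 1 := hsub j hA
    have hdist : |A - c| ≤ 1 / (2 * V) := by
      rw [abs_le]
      constructor
      · linarith [hA.1, e1]
      · linarith [hA.2, e2]
    have hlip := hf A hA1 c hcmem
    have : f A - f c ≤ M * (1 / (2 * V)) :=
      le_trans (le_trans (le_abs_self _) hlip) (mul_le_mul_of_nonneg_left hdist hM.le)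
    have hMV : M * (1 / (2 * V)) = M / (2 * V) := by ring
    linarith [hfc]
  -- lower bound on f over interval jstar
  have hlo : ∀ A ∈ Set.Icc (((jstar : ℕ) : ℝ) / V) ((((jstar : ℕ) : ℝ) + 1) / V),
      f Astar - M / V ≤ f A := by
    intro A hA
    have hA1 : A ∈ Set.Icc (0:ℝ) 1 := hsub jstar hA
    have e3 : (((jstar : ℕ) : ℝ) + 1) / V - ((jstar : ℕ) : ℝ) / V = 1 / V := by
      field_simp
      ring
    have hdist : |Astar - A| ≤ 1 / V := by
      rw [abs_le]
      constructor
      · linarith [hA.2, hjstar.1, e3]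
      · linarith [hA.1, hjstar.2, e3]
    have hlip := hf Astar hAstar A hA1
    have : f Astar - f A ≤ M * (1 / V) :=
      le_trans (le_trans (le_abs_self _) hlip) (mul_le_mul_of_nonneg_left hdist hM.le)
    have : f Astar - f A ≤ M / V := by rw [mul_one_div] at this; exact this
    linarith
  have hlow : ∀ A ∈ Set.Icc (0:ℝ) 1, f 0 - M ≤ f A := by
    intro A hA
    have h := hf 0 (by simp) A hA
    have h0 : |(0:ℝ) - A| ≤ 1 := by
      rw [abs_le]; constructor <;> linarith [hA.1, hA.2]
    have h2 : |f 0 - f A| ≤ M := le_trans h (by nlinarith)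
    linarith [(abs_le.1 h2).2]
  have trivhi : ∀ A ∈ Set.Icc (((jstar : ℕ) : ℝ) / V) ((((jstar : ℕ) : ℝ) + 1) / V),
      f A ≤ f Astar := fun A hA => hmax A (hsub jstar hA)
  have Bj := avg_bounds η hη _ _ (hab j) f w
    (fun A hA => hw A (hsub j hA)) (hwint.mono_set (hsub j)) (hwfint.mono_set (hsub j))
    (f 0 - M) (f Astar - M * t + M / (2 * V))
    (fun A hA => hlow A (hsub j hA)) hhi
  have Bjs := avg_bounds η hη _ _ (hab jstar) f w
    (fun A hA => hw A (hsub jstar hA)) (hwint.mono_set (hsub jstar))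
    (hwfint.mono_set (hsub jstar)) (f Astar - M / V) (f Astar) hlo trivhi
  rw [hfI j, hfI jstar] at *
  have key1 := Bj.2
  have key2 := Bjs.1
  have h2V : M / (2 * V) ≤ M / V := by
    apply div_le_div_of_nonneg_left hM.le hVpos; linarith
  have h3 : 3 * M / V = 3 * (M / V) := by ring
  have hMVpos : 0 < M / V := div_pos hM hVpos
  rw [h3]
  linarith
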